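/- Let {X_n, F_n}_{n≥0} be a discrete-time real-valued conditionally symmetric martingale whose jumps ξ_k = X_k − X_{k−1} satisfy ξ_k ≤ d almost surely for every k ≥ 1, for some fixed d > 0. Let Q_n = Σ_{k=1}^n E[ξ_k² | F_{k−1}] (with Q_0 = 0) be the predictable quadratic variation. Then for every z, r > 0, P( max_{1≤k≤n} (X_k − X_0) ≥ z and Q_n ≤ r for some n ≥ 1 ) ≤ exp( −(z²/(2r)) · C(zd/r) ), where C(u) = 2[u·arcsinh(u) − √(1+u²) + 1]/u² for u > 0. -/

import Mathlib

open MeasureTheory ProbabilityTheory Filter Set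

/-- The function `C(u) = 2[u·arcsinh(u) − √(1+u²) + 1]/u²` for `u > 0`. -/
noncomputable def Cfun (u : ℝ) : ℝ :=
  2 * (u * Real.arsinh u - Real.sqrt (1 + u ^ 2) + 1) / u ^ 2

lemma aux_convexOn_sinh : ConvexOn ℝ (Set.Ici (0:ℝ)) Real.sinh := by
  refine convexOn_of_deriv2_nonneg' (convex_Ici 0) Real.differentiable_sinh.differentiableOn
    ?_ ?_
  · rw [Real.deriv_sinh]; exact Real.differentiable_cosh.differentiableOn
  · intro x hx
    simp only [Function.iterate_succ, Function.iterate_zero, Function.comp_apply, id]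
    rw [Real.deriv_sinh, Real.deriv_cosh]
    exact Real.sinh_nonneg_iff.2 hx

lemma aux_sinh_slope {s t : ℝ} (hs : 0 ≤ s) (hst : s ≤ t) (ht : 0 < t) :
    Real.sinh s ≤ s / t * Real.sinh t := by
  have h := aux_convexOn_sinh.2 (mem_Ici.2 (hs.trans hst)) (mem_Ici.2 (le_refl (0:ℝ)))
    (show (0:ℝ) ≤ s / t by positivity)
    (show (0:ℝ) ≤ 1 - s / t by
      have : s / t ≤ 1 := (div_le_one ht).2 hst
      linarith) (by ring)
  simpa [Real.sinh_zero, smul_eq_mul, div_mul_cancel₀ s ht.ne'] using h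

/-- `cosh y = 1 + 2 sinh(y/2)^2`. -/
lemma aux_cosh_eq (y : ℝ) : Real.cosh y = 1 + 2 * Real.sinh (y / 2) ^ 2 := by
  have h : y = 2 * (y / 2) := by ring
  rw [h, Real.cosh_two_mul, Real.cosh_sq']
  ring_nf

/-- Key pointwise bound: for `|x| ≤ D` and `0 ≤ L`,
`cosh (L x) ≤ 1 + (cosh (L D) - 1) * x ^ 2 / D ^ 2`. -/
lemma aux_cosh_bound {x D L : ℝ} (hD : 0 < D) (hx : |x| ≤ D) (hL : 0 ≤ L) :
    Real.cosh (L * x) ≤ 1 + (Real.cosh (L * D) - 1) * x ^ 2 / D ^ 2 := by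
  rcases eq_or_lt_of_le hL with h0 | hL
  · simp [← h0]
  have habs : Real.cosh (L * x) = Real.cosh (L * |x|) := by
    rcases abs_cases x with ⟨h, _⟩ | ⟨h, _⟩
    · rw [h]
    · rw [h, mul_neg, Real.cosh_neg]
  have hslope : Real.sinh (L * |x| / 2) ≤ |x| / D * Real.sinh (L * D / 2) := by
    have h1 : (0:ℝ) ≤ L * |x| / 2 := by positivity
    have h2 : L * |x| / 2 ≤ L * D / 2 := by
      have := abs_nonneg x
      nlinarith
    have h3 : (0:ℝ) < L * D / 2 := by positivity
    have := aux_sinh_slope h1 h2 h3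
    have heq : L * |x| / 2 / (L * D / 2) = |x| / D := by
      field_simp
    rwa [heq] at this
  have hs1 : (0:ℝ) ≤ Real.sinh (L * |x| / 2) := Real.sinh_nonneg_iff.2 (by positivity)
  have hsq : Real.sinh (L * |x| / 2) ^ 2 ≤ (|x| / D) ^ 2 * Real.sinh (L * D / 2) ^ 2 := by
    have h2 : (0:ℝ) ≤ |x| / D * Real.sinh (L * D / 2) := by
      have := Real.sinh_nonneg_iff.2 (show (0:ℝ) ≤ L * D / 2 by positivity)
      positivity
    calc Real.sinh (L * |x| / 2) ^ 2 ≤ (|x| / D * Real.sinh (L * D / 2)) ^ 2 := by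
          exact pow_le_pow_left₀ hs1 hslope 2
      _ = (|x| / D) ^ 2 * Real.sinh (L * D / 2) ^ 2 := by ring
  rw [habs, aux_cosh_eq (L * |x|), aux_cosh_eq (L * D)]
  have hxx : (|x| / D) ^ 2 = x ^ 2 / D ^ 2 := by
    rw [div_pow, sq_abs]
  calc 1 + 2 * Real.sinh (L * |x| / 2) ^ 2
      ≤ 1 + 2 * ((|x| / D) ^ 2 * Real.sinh (L * D / 2) ^ 2) := by nlinarith
    _ = 1 + (1 + 2 * Real.sinh (L * D / 2) ^ 2 - 1) * x ^ 2 / D ^ 2 := by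
        rw [hxx]; ring

lemma aux_integrable_of_ae_bound {Ω : Type*} {m0 : MeasurableSpace Ω} {μ : Measure Ω}
    [IsFiniteMeasure μ] {f : Ω → ℝ} (hf : AEStronglyMeasurable f μ) {C : ℝ}
    (h : ∀ᵐ ω ∂μ, |f ω| ≤ C) : Integrable f μ :=
  ⟨hf, HasFiniteIntegral.of_bounded (C := C) (by simpa [Real.norm_eq_abs] using h)⟩

lemma aux_supermartingale_maximal {Ω : Type*} {m0 : MeasurableSpace Ω} {μ : Measure Ω}
    [IsProbabilityMeasure μ] {𝒢 : Filtration ℕ m0} {Y : ℕ → Ω → ℝ}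
    (hY : Supermartingale Y 𝒢 μ) (hpos : ∀ k ω, 0 ≤ Y k ω) {a : ℝ} (ha : 0 < a) (n : ℕ) :
    ENNReal.ofReal a *
      μ {ω | a ≤ (Finset.range (n + 1)).sup' Finset.nonempty_range_add_one fun k => Y k ω}
      ≤ ENNReal.ofReal (∫ ω, Y 0 ω ∂μ) := by
  classical
  set σ : Ω → WithTop ℕ := fun ω => (hittingBtwn Y (Set.Ici a) 0 n ω : ℕ) with hσdef
  have hσ : IsStoppingTime 𝒢 σ := Adapted.isStoppingTime_hittingBtwn hY.stronglyAdapted.adapted measurableSet_Ici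
  set S := {ω | a ≤ (Finset.range (n + 1)).sup' Finset.nonempty_range_add_one fun k => Y k ω}
    with hSdef
  have hS_meas : MeasurableSet S :=
    measurableSet_le measurable_const
      (Finset.measurable_range_sup'' fun k _ => (hY.stronglyMeasurable k).measurable.le (𝒢.le k))
  -- stopped value is ≥ a on S
  have h1 : ∀ ω ∈ S, a ≤ stoppedValue Y σ ω := by
    intro ω hω
    simp only [hSdef, Set.mem_setOf_eq, Finset.le_sup'_iff, Finset.mem_range,
      Nat.lt_succ_iff] at hω
    obtain ⟨j, hj1, hj2⟩ := hω
    have : stoppedValue Y σ ω ∈ Set.Ici a := by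
      refine stoppedValue_hittingBtwn_mem ?_
      exact ⟨j, ⟨Nat.zero_le _, hj1⟩, hj2⟩
    exact this
  -- integrability of the stopped value
  have hneg : Submartingale (-Y) 𝒢 μ := hY.neg
  have hint_neg : Integrable (stoppedValue (-Y) σ) μ :=
    hneg.integrable_stoppedValue hσ (N := n) fun ω => WithTop.coe_le_coe.2 (hittingBtwn_le ω)
  have hint : Integrable (stoppedValue Y σ) μ := by
    have : stoppedValue Y σ = -stoppedValue (-Y) σ := by
      funext ω; simp [stoppedValue]
    rw [this]; exact hint_neg.neg
  have h2 : a * (μ S).toReal ≤ ∫ ω in S, stoppedValue Y σ ω ∂μ :=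
    by have h := setIntegral_ge_of_const_le hS_meas (measure_ne_top _ _) h1 hint.integrableOn
       rw [smul_eq_mul, mul_comm] at h; exact h
  have h3 : ∫ ω in S, stoppedValue Y σ ω ∂μ ≤ ∫ ω, stoppedValue Y σ ω ∂μ :=
    setIntegral_le_integral hint (ae_of_all _ fun ω => hpos _ _)
  have h4 : ∫ ω, stoppedValue Y σ ω ∂μ ≤ ∫ ω, Y 0 ω ∂μ := by
    have hmono := hneg.expected_stoppedValue_mono (isStoppingTime_const 𝒢 0) hσ
      (fun ω => zero_le) (N := n) fun ω => WithTop.coe_le_coe.2 (hittingBtwn_le ω)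
    rw [stoppedValue_const] at hmono
    have heq1 : ∫ ω, (-Y) 0 ω ∂μ = -∫ ω, Y 0 ω ∂μ := by
      simp only [Pi.neg_apply]; exact integral_neg _
    have heq2 : ∫ ω, stoppedValue (-Y) σ ω ∂μ = -∫ ω, stoppedValue Y σ ω ∂μ := by
      rw [← integral_neg]
      exact integral_congr_ae (ae_of_all _ fun ω => by simp [stoppedValue])
    rw [heq1, heq2] at hmono
    linarith
  calc ENNReal.ofReal a * μ S = ENNReal.ofReal (a * (μ S).toReal) := by
        rw [ENNReal.ofReal_mul ha.le, ENNReal.ofReal_toReal (measure_ne_top _ _)]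
    _ ≤ ENNReal.ofReal (∫ ω, Y 0 ω ∂μ) :=
        ENNReal.ofReal_le_ofReal (h2.trans (h3.trans h4))

/-- Theorem 4: Freedman-type inequality for conditionally symmetric martingales with jumps
bounded above by `d`, in terms of the predictable quadratic variation. -/
theorem conditionally_symmetric_martingale_freedman_bound
    {Ω : Type*} {m0 : MeasurableSpace Ω} {μ : Measure Ω} [IsProbabilityMeasure μ]
    {F : Filtration ℕ m0} {X : ℕ → Ω → ℝ}
    (hmart : Martingale X F μ)
    (hsymm : ∀ k : ℕ, 1 ≤ k → ∀ g : ℝ → ℝ, Measurable g →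
      μ[fun ω => g (X k ω - X (k - 1) ω) | F (k - 1)]
        =ᵐ[μ] μ[fun ω => g (-(X k ω - X (k - 1) ω)) | F (k - 1)])
    {d : ℝ} (hd : 0 < d)
    (hbdd : ∀ k : ℕ, 1 ≤ k → ∀ᵐ ω ∂μ, X k ω - X (k - 1) ω ≤ d)
    {z r : ℝ} (hz : 0 < z) (hr : 0 < r) :
    μ {ω | ∃ n : ℕ, 1 ≤ n ∧ (∃ k, 1 ≤ k ∧ k ≤ n ∧ z ≤ X k ω - X 0 ω) ∧
        (∑ k ∈ Finset.Icc 1 n,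
          (μ[fun ω' => (X k ω' - X (k - 1) ω') ^ 2 | F (k - 1)]) ω) ≤ r}
      ≤ ENNReal.ofReal (Real.exp (-(z ^ 2 / (2 * r)) * Cfun (z * d / r))) := by
  classical
  -- Constants
  set u : ℝ := z * d / r with hu_def
  have hu : 0 < u := by positivity
  set L : ℝ := Real.arsinh u / d with hL_def
  have hLd : L * d = Real.arsinh u := div_mul_cancel₀ _ hd.ne'
  have hL : 0 < L := div_pos (Real.arsinh_pos_iff.2 hu) hd
  set c : ℝ := (Real.cosh (L * d) - 1) / d ^ 2 with hc_def
  have hc : 0 ≤ c := div_nonneg (by linarith [Real.one_le_cosh (L * d)]) (by positivity)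
  -- Processes
  set ξ : ℕ → Ω → ℝ := fun n ω => X (n + 1) ω - X n ω with hξ_def
  set V : ℕ → Ω → ℝ := fun k => μ[fun ω' => (X k ω' - X (k - 1) ω') ^ 2 | F (k - 1)]
    with hV_def
  set Q : ℕ → Ω → ℝ := fun n ω => ∑ k ∈ Finset.Icc 1 n, V k ω with hQ_def
  set Y : ℕ → Ω → ℝ := fun n ω => Real.exp (L * (X n ω - X 0 ω) - c * Q n ω) with hY_def
  -- Measurability
  have hXsm : ∀ n, StronglyMeasurable (X n) := fun n => (hmart.stronglyMeasurable n).mono (F.le n)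
  have hξm : ∀ n, Measurable (ξ n) := fun n => (hXsm (n + 1)).measurable.sub (hXsm n).measurable
  have hVsm : ∀ k : ℕ, StronglyMeasurable[F (k - 1)] (V k) := fun k => stronglyMeasurable_condExp
  have hQm : ∀ n, Measurable[F n] (Q n) := by
    intro n
    apply Finset.measurable_sum
    intro k hk
    exact ((hVsm k).mono (F.mono ((Nat.sub_le k 1).trans (Finset.mem_Icc.1 hk).2))).measurable
  have hYsm : ∀ n, StronglyMeasurable[F n] (Y n) := by
    intro n
    refine Measurable.stronglyMeasurable ?_
    exact ((((hmart.stronglyAdapted n).measurable.sub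
      ((hmart.stronglyAdapted 0).mono (F.mono (Nat.zero_le n))).measurable).const_mul L).sub
      ((hQm n).const_mul c)).exp
  -- a.e. bounds on the jumps
  have hub : ∀ n : ℕ, ∀ᵐ ω ∂μ, ξ n ω ≤ d := fun n => hbdd (n + 1) (Nat.le_add_left 1 n)
  have hlb : ∀ n : ℕ, ∀ᵐ ω ∂μ, -d ≤ ξ n ω := by
    intro n
    set g : ℝ → ℝ := (Set.Ioi d).indicator fun _ => (1 : ℝ) with hg_def
    have hg : Measurable g := measurable_const.indicator measurableSet_Ioi
    have hsym := hsymm (n + 1) (Nat.le_add_left 1 n) g hg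
    have hzero : (fun ω => g (X (n + 1) ω - X n ω)) =ᵐ[μ] 0 := by
      filter_upwards [hub n] with ω hω
      simp only [hg_def, Set.indicator_apply, Set.mem_Ioi, Pi.zero_apply, ite_eq_right_iff]
      intro h; exact absurd h (not_lt.2 hω)
    have hcond0 : μ[fun ω => g (X (n + 1) ω - X n ω)|F n] =ᵐ[μ] 0 :=
      (condExp_congr_ae hzero).trans (by rw [condExp_zero])
    have hmeas2 : Measurable fun ω => g (-(X (n + 1) ω - X n ω)) := hg.comp (hξm n).neg
    have hint2 : Integrable (fun ω => g (-(X (n + 1) ω - X n ω))) μ := by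
      refine aux_integrable_of_ae_bound hmeas2.aestronglyMeasurable (C := 1) (ae_of_all _ ?_)
      intro ω
      simp only [hg_def, Set.indicator_apply]
      split_ifs <;> simp
    have hcond2 : μ[fun ω => g (-(X (n + 1) ω - X n ω))|F n] =ᵐ[μ] 0 := hsym.symm.trans hcond0
    have hzero2 : ∫ ω, g (-(X (n + 1) ω - X n ω)) ∂μ = 0 := by
      calc ∫ ω, g (-(X (n + 1) ω - X n ω)) ∂μ
          = ∫ ω, (μ[fun ω => g (-(X (n + 1) ω - X n ω))|F n]) ω ∂μ :=
            (integral_condExp (F.le n)).symm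
        _ = ∫ _ω, (0 : ℝ) ∂μ := integral_congr_ae hcond2
        _ = 0 := by simp
    have hnn : 0 ≤ᵐ[μ] fun ω => g (-(X (n + 1) ω - X n ω)) :=
      ae_of_all _ fun ω => Set.indicator_apply_nonneg fun _ => zero_le_one
    have hae0 : (fun ω => g (-(X (n + 1) ω - X n ω))) =ᵐ[μ] 0 :=
      (integral_eq_zero_iff_of_nonneg_ae hnn hint2).1 hzero2
    filter_upwards [hae0] with ω hω
    by_contra h
    push_neg at h
    have h1 : g (-(X (n + 1) ω - X n ω)) = 1 := by
      simp only [hg_def, Set.indicator_apply, Set.mem_Ioi]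
      rw [if_pos]
      simp only [hξ_def] at h
      linarith
    rw [h1] at hω
    exact one_ne_zero hω
  have hV0 : ∀ k : ℕ, 0 ≤ᵐ[μ] V k := fun k =>
    condExp_nonneg (ae_of_all _ fun ω => sq_nonneg _)
  have hgood : ∀ᵐ ω ∂μ, (∀ n, ξ n ω ≤ d) ∧ (∀ n, -d ≤ ξ n ω) ∧ ∀ k, 0 ≤ V k ω := by
    refine ((ae_all_iff.2 hub).and ((ae_all_iff.2 hlb).and (ae_all_iff.2 hV0))).mono ?_
    intro ω h; exact ⟨h.1, h.2.1, fun k => h.2.2 k⟩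
  -- telescoping bound
  have h_tel : ∀ ω, (∀ n, ξ n ω ≤ d) → ∀ n : ℕ, X n ω - X 0 ω ≤ n * d := by
    intro ω hω n
    have h1 : X n ω - X 0 ω = ∑ i ∈ Finset.range n, ξ i ω := by
      simp only [hξ_def]
      exact (Finset.sum_range_sub (fun i => X i ω) n).symm
    rw [h1]
    calc ∑ i ∈ Finset.range n, ξ i ω ≤ ∑ _i ∈ Finset.range n, d :=
          Finset.sum_le_sum fun i _ => hω i
      _ = n * d := by simp [mul_comm]
  -- integrability of Y
  have hYint : ∀ n, Integrable (Y n) μ := by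
    intro n
    refine aux_integrable_of_ae_bound ((hYsm n).mono (F.le n)).aestronglyMeasurable
      (C := Real.exp (L * (n * d))) ?_
    filter_upwards [hgood] with ω hω
    obtain ⟨h1, _h2, h3⟩ := hω
    have hQ : 0 ≤ Q n ω := Finset.sum_nonneg fun k _ => h3 k
    have hX := h_tel ω h1 n
    rw [hY_def, abs_of_pos (Real.exp_pos _)]
    apply Real.exp_le_exp.2
    have hb1 : L * (X n ω - X 0 ω) ≤ L * (n * d) := mul_le_mul_of_nonneg_left hX hL.le
    have hb2 : 0 ≤ c * Q n ω := mul_nonneg hc hQ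
    linarith
  -- integrability of exp (L ξ)
  have hexp_int : ∀ n, Integrable (fun ω => Real.exp (L * ξ n ω)) μ := by
    intro n
    refine aux_integrable_of_ae_bound (((hξm n).const_mul L).exp).aestronglyMeasurable
      (C := Real.exp (L * d)) ?_
    filter_upwards [hub n] with ω hω
    rw [abs_of_pos (Real.exp_pos _)]
    exact Real.exp_le_exp.2 (mul_le_mul_of_nonneg_left hω hL.le)
  have hexp_int' : ∀ n, Integrable (fun ω => Real.exp (-(L * ξ n ω))) μ := by
    intro n
    refine aux_integrable_of_ae_bound (((hξm n).const_mul L).neg.exp).aestronglyMeasurable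
      (C := Real.exp (L * d)) ?_
    filter_upwards [hlb n] with ω hω
    rw [abs_of_pos (Real.exp_pos _)]
    apply Real.exp_le_exp.2
    have h2 : -(L * ξ n ω) = L * (-ξ n ω) := by ring
    rw [h2]
    exact mul_le_mul_of_nonneg_left (by linarith) hL.le
  -- the key conditional expectation bound
  have hkey : ∀ n, μ[fun ω => Real.exp (L * ξ n ω)|F n]
      ≤ᵐ[μ] fun ω => Real.exp (c * V (n + 1) ω) := by
    intro n
    have hsym := hsymm (n + 1) (Nat.le_add_left 1 n) (fun x => Real.exp (L * x))
      ((measurable_id.const_mul L).exp)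
    simp only [mul_neg] at hsym
    have hsym' : μ[fun ω => Real.exp (L * ξ n ω)|F n]
        =ᵐ[μ] μ[fun ω => Real.exp (-(L * ξ n ω))|F n] := hsym
    have hint1 : Integrable (fun ω => Real.exp (L * ξ n ω)) μ := hexp_int n
    have hint1' : Integrable (fun ω => Real.exp (-(L * ξ n ω))) μ := hexp_int' n
    have hcoshint : Integrable (fun ω => Real.cosh (L * ξ n ω)) μ := by
      have h2 : (fun ω => Real.cosh (L * ξ n ω)) =
          fun ω => (Real.exp (L * ξ n ω) + Real.exp (-(L * ξ n ω))) / 2 :=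
        funext fun ω => Real.cosh_eq _
      rw [h2]
      exact (hint1.add hint1').div_const 2
    have hch : μ[fun ω => Real.cosh (L * ξ n ω)|F n]
        =ᵐ[μ] μ[fun ω => Real.exp (L * ξ n ω)|F n] := by
      have h2 : (fun ω => Real.cosh (L * ξ n ω)) = (2⁻¹ : ℝ) •
          ((fun ω => Real.exp (L * ξ n ω)) + fun ω => Real.exp (-(L * ξ n ω))) := by
        funext ω
        simp only [Pi.smul_apply, Pi.add_apply, smul_eq_mul, Real.cosh_eq]
        ring
      rw [h2]
      have hsmul := condExp_smul (μ := μ) (m := F n) (2⁻¹ : ℝ)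
        ((fun ω => Real.exp (L * ξ n ω)) + fun ω => Real.exp (-(L * ξ n ω)))
      have hadd := condExp_add (μ := μ) (m := F n) hint1 hint1'
      refine hsmul.trans ?_
      filter_upwards [hadd, hsym'] with ω h1 h2
      simp only [Pi.smul_apply, smul_eq_mul] at h1 ⊢
      rw [h1]
      simp only [Pi.add_apply]
      rw [← h2]
      ring
    have hptw : (fun ω => Real.cosh (L * ξ n ω)) ≤ᵐ[μ] fun ω => 1 + c * ξ n ω ^ 2 := by
      filter_upwards [hub n, hlb n] with ω h1 h2
      have hb := aux_cosh_bound hd (abs_le.2 ⟨h2, h1⟩) hL.le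
      calc Real.cosh (L * ξ n ω) ≤ 1 + (Real.cosh (L * d) - 1) * ξ n ω ^ 2 / d ^ 2 := hb
        _ = 1 + c * ξ n ω ^ 2 := by rw [hc_def]; ring
    have hsqint : Integrable (fun ω => ξ n ω ^ 2) μ := by
      refine aux_integrable_of_ae_bound ((hξm n).pow_const 2).aestronglyMeasurable
        (C := d ^ 2) ?_
      filter_upwards [hub n, hlb n] with ω h1 h2
      rw [abs_of_nonneg (sq_nonneg _)]
      have habs : |ξ n ω| ≤ d := abs_le.2 ⟨h2, h1⟩
      calc ξ n ω ^ 2 = |ξ n ω| ^ 2 := (sq_abs _).symm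
        _ ≤ d ^ 2 := pow_le_pow_left₀ (abs_nonneg _) habs 2
    have hrhsint : Integrable (fun ω => 1 + c * ξ n ω ^ 2) μ :=
      (integrable_const 1).add (hsqint.const_mul c)
    have hmono := condExp_mono (m := F n) hcoshint hrhsint hptw
    have hVeq : μ[fun ω => ξ n ω ^ 2|F n] = V (n + 1) := by
      rw [hV_def]
      rfl
    have hrhs : μ[fun ω => 1 + c * ξ n ω ^ 2|F n] =ᵐ[μ] fun ω => 1 + c * V (n + 1) ω := by
      have h2 : (fun ω => 1 + c * ξ n ω ^ 2) =
          (fun _ => (1 : ℝ)) + c • fun ω => ξ n ω ^ 2 := by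
        funext ω; simp [smul_eq_mul]
      rw [h2]
      have hadd := condExp_add (μ := μ) (m := F n) (integrable_const (1 : ℝ)) (hsqint.smul c)
      refine hadd.trans ?_
      have hsmul := condExp_smul (μ := μ) (m := F n) c fun ω => ξ n ω ^ 2
      filter_upwards [hsmul] with ω h1
      simp only [Pi.add_apply]
      rw [condExp_const (F.le n), h1]
      simp only [Pi.smul_apply, smul_eq_mul]
      rw [hVeq]
    calc μ[fun ω => Real.exp (L * ξ n ω)|F n]
        =ᵐ[μ] μ[fun ω => Real.cosh (L * ξ n ω)|F n] := hch.symm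
      _ ≤ᵐ[μ] μ[fun ω => 1 + c * ξ n ω ^ 2|F n] := hmono
      _ =ᵐ[μ] fun ω => 1 + c * V (n + 1) ω := hrhs
      _ ≤ᵐ[μ] fun ω => Real.exp (c * V (n + 1) ω) := by
          refine ae_of_all _ fun ω => ?_
          show 1 + c * V (n + 1) ω ≤ Real.exp (c * V (n + 1) ω)
          linarith [Real.add_one_le_exp (c * V (n + 1) ω)]
  -- supermartingale property
  have hQsucc : ∀ n ω, Q (n + 1) ω = Q n ω + V (n + 1) ω := by
    intro n ω
    rw [hQ_def]
    exact Finset.sum_Icc_succ_top (Nat.le_add_left 1 n) _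
  have hstep : ∀ n, μ[Y (n + 1)|F n] ≤ᵐ[μ] Y n := by
    intro n
    set g : Ω → ℝ := fun ω => Y n ω * Real.exp (-(c * V (n + 1) ω)) with hg_def
    set h : Ω → ℝ := fun ω => Real.exp (L * ξ n ω) with hh_def
    have hYsucc : Y (n + 1) = g * h := by
      funext ω
      simp only [hY_def, hg_def, hh_def, Pi.mul_apply, hξ_def]
      rw [← Real.exp_add, ← Real.exp_add]
      congr 1
      rw [hQsucc n ω]
      ring
    have hgsm : StronglyMeasurable[F n] g := by
      refine ((hYsm n).mul ?_)
      exact ((((hVsm (n + 1)).measurable.const_mul c).neg).exp).stronglyMeasurable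
    have hgh_int : Integrable (g * h) μ := hYsucc ▸ hYint (n + 1)
    have hh_int : Integrable h μ := hexp_int n
    have hpull := condExp_mul_of_stronglyMeasurable_left (μ := μ) hgsm hgh_int hh_int
    rw [hYsucc]
    refine hpull.le.trans ?_
    filter_upwards [hkey n] with ω hω
    have hg0 : 0 ≤ g ω := by
      rw [hg_def, hY_def]
      positivity
    calc g ω * (μ[h|F n]) ω ≤ g ω * Real.exp (c * V (n + 1) ω) :=
          mul_le_mul_of_nonneg_left hω hg0
      _ = Y n ω := by
          rw [hg_def, mul_assoc, ← Real.exp_add, neg_add_cancel, Real.exp_zero, mul_one]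
  have hsuper : Supermartingale Y F μ := supermartingale_nat (fun n => hYsm n) hYint hstep
  have hY0 : ∀ ω, Y 0 ω = 1 := by
    intro ω
    rw [hY_def]
    norm_num [hQ_def]
  have hint0 : ∫ ω, Y 0 ω ∂μ = 1 := by
    calc ∫ ω, Y 0 ω ∂μ = ∫ _ω, (1 : ℝ) ∂μ := integral_congr_ae (ae_of_all _ hY0)
      _ = 1 := by simp
  -- final constants
  set a : ℝ := Real.exp (L * z - c * r) with ha_def
  have ha : 0 < a := Real.exp_pos _
  set Sm : ℕ → Set Ω := fun m =>
    {ω | a ≤ (Finset.range (m + 1)).sup' Finset.nonempty_range_add_one fun k => Y k ω} with hS_def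
  have hSmono : Monotone Sm := by
    intro m m' hmm' ω hω
    simp only [hS_def, Set.mem_setOf_eq] at hω ⊢
    exact le_trans hω
      (Finset.sup'_mono _ (Finset.range_subset_range.2 (by omega)) Finset.nonempty_range_add_one)
  -- inclusion of the event
  have hsub : {ω | ∃ n : ℕ, 1 ≤ n ∧ (∃ k, 1 ≤ k ∧ k ≤ n ∧ z ≤ X k ω - X 0 ω) ∧
      (∑ k ∈ Finset.Icc 1 n,
        (μ[fun ω' => (X k ω' - X (k - 1) ω') ^ 2 | F (k - 1)]) ω) ≤ r}
      ≤ᵐ[μ] ⋃ m, Sm m := by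
    filter_upwards [hgood] with ω hω
    intro hmem
    obtain ⟨_h1, _h2, h3⟩ := hω
    obtain ⟨n, _hn1, ⟨k, hk1, hk2, hkz⟩, hQn⟩ := hmem
    have hQn' : Q n ω ≤ r := hQn
    have hQmon : Q k ω ≤ Q n ω := by
      rw [hQ_def]
      exact Finset.sum_le_sum_of_subset_of_nonneg
        (Finset.Icc_subset_Icc le_rfl hk2) fun i _ _ => h3 i
    have hQk : Q k ω ≤ r := hQmon.trans hQn'
    have hYk : a ≤ Y k ω := by
      rw [ha_def, hY_def]
      apply Real.exp_le_exp.2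
      have hb1 : L * z ≤ L * (X k ω - X 0 ω) := mul_le_mul_of_nonneg_left hkz hL.le
      have hb2 : c * Q k ω ≤ c * r := mul_le_mul_of_nonneg_left hQk hc
      linarith
    refine Set.mem_iUnion.2 ⟨n, ?_⟩
    rw [hS_def]
    refine le_trans hYk ?_
    exact Finset.le_sup' (fun k => Y k ω) (Finset.mem_range.2 (Nat.lt_succ_of_le hk2))
  -- the arithmetic identity for the exponent
  have harith : Real.exp (-(z ^ 2 / (2 * r)) * Cfun (z * d / r)) = a⁻¹ := by
    rw [ha_def, ← Real.exp_neg]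
    congr 1
    rw [Cfun, hL_def, hc_def, hLd, Real.cosh_arsinh, ← hu_def]
    have hune : u ≠ 0 := hu.ne'
    have hdne : d ≠ 0 := hd.ne'
    have hrne : r ≠ 0 := hr.ne'
    rw [hu_def]
    field_simp
    ring
  -- put it all together
  calc μ {ω | ∃ n : ℕ, 1 ≤ n ∧ (∃ k, 1 ≤ k ∧ k ≤ n ∧ z ≤ X k ω - X 0 ω) ∧
        (∑ k ∈ Finset.Icc 1 n,
          (μ[fun ω' => (X k ω' - X (k - 1) ω') ^ 2 | F (k - 1)]) ω) ≤ r}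
      ≤ μ (⋃ m, Sm m) := measure_mono_ae hsub
    _ = ⨆ m, μ (Sm m) := hSmono.directed_le.measure_iUnion
    _ ≤ ENNReal.ofReal (Real.exp (-(z ^ 2 / (2 * r)) * Cfun (z * d / r))) := by
        refine iSup_le fun m => ?_
        have hmax := aux_supermartingale_maximal hsuper
          (fun k ω => (Real.exp_pos _).le) ha m
        rw [hint0, ENNReal.ofReal_one] at hmax
        have h5 : μ (Sm m) ≤ (ENNReal.ofReal a)⁻¹ := by
          rw [ENNReal.le_inv_iff_mul_le, mul_comm]
          exact hmax
        rw [harith, ENNReal.ofReal_inv_of_pos ha]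
        exact h5
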